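/- Let N ≥ 2 and let L be an N×N real symmetric matrix whose kernel is exactly the span of the all-ones vector 1_N. Then for every proper subset Λ ⊊ {0,…,N−1}, the rows of L indexed by Λ are linearly independent; equivalently, the space {x ∈ ℝ^N : (L·x)_i = 0 for all i ∈ Λ} has dimension exactly N − |Λ|. -/

import Mathlib

open Matrix

/-- For the graph Laplacian `L` of a connected graph (symmetric with kernel exactly the
span of the all-ones vector) and a proper subset `Λ` of indices, the rows of `L` indexed
by `Λ` are linearly independent; equivalently, the cosparse analysis subspace
`{x : (L x)_i = 0 for i ∈ Λ}` has dimension exactly `N - |Λ|`. -/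
theorem sampled_laplacian_full_row_rank
    (N : ℕ) (hN : 2 ≤ N)
    (L : Matrix (Fin N) (Fin N) ℝ)
    (hLsymm : L.IsSymm)
    (hker : ∀ x : Fin N → ℝ, L.mulVec x = 0 ↔ ∃ z : ℝ, x = fun _ => z)
    (Λ : Finset (Fin N)) (hΛ : Λ ≠ Finset.univ) :
    LinearIndependent ℝ (fun i : Λ => L i.1) ∧
    Module.finrank ℝ
      ↥(⨅ i ∈ Λ, LinearMap.ker
          ((LinearMap.proj i : (Fin N → ℝ) →ₗ[ℝ] ℝ) ∘ₗ L.mulVecLin)) = N - Λ.card := by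
  -- pick an index outside Λ
  obtain ⟨j0, hj0⟩ : ∃ j, j ∉ Λ := by
    by_contra h
    push_neg at h
    exact hΛ (Finset.eq_univ_iff_forall.2 h)
  have hli : LinearIndependent ℝ (fun i : Λ => L i.1) := by
    rw [Fintype.linearIndependent_iff]
    intro g hg i
    classical
    set c : Fin N → ℝ := fun j => if h : j ∈ Λ then g ⟨j, h⟩ else 0 with hc
    have hmul : L.mulVec c = 0 := by
      have hvm : L.vecMul c = 0 := by
        ext k
        have : L.vecMul c k = ∑ i : Λ, g i * L i.1 k := by
          rw [Matrix.vecMul, dotProduct]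
          rw [← Finset.sum_subset (Finset.subset_univ Λ)
            (fun x _ hx => by simp [hc, hx])]
          rw [← Finset.sum_attach Λ (fun j => c j * L j k)]
          congr 1; ext i; simp [hc, i.2]
        rw [this]
        have := congr_fun hg k
        simpa using this
      have : Lᵀ.mulVec c = 0 := by rwa [Matrix.mulVec_transpose]
      rwa [hLsymm.eq] at this
    obtain ⟨z, hz⟩ := (hker c).1 hmul
    have hz0 : z = 0 := by
      have := congr_fun hz j0
      simp [hc, hj0] at this
      exact this.symm
    have := congr_fun hz i.1
    simp [hc, i.2, hz0] at this
    exact this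
  refine ⟨hli, ?_⟩
  classical
  set M : Matrix Λ (Fin N) ℝ := L.submatrix Subtype.val id with hM
  have hrows : (fun i : Λ => M i) = fun i : Λ => L i.1 := rfl
  have hkereq : (⨅ i ∈ Λ, LinearMap.ker
          ((LinearMap.proj i : (Fin N → ℝ) →ₗ[ℝ] ℝ) ∘ₗ L.mulVecLin))
      = LinearMap.ker M.mulVecLin := by
    ext x
    simp only [Submodule.mem_iInf, LinearMap.mem_ker, LinearMap.coe_comp,
      Function.comp_apply, LinearMap.proj_apply, Matrix.mulVecLin_apply]
    constructor
    · intro h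
      ext i
      have := h i.1 i.2
      simpa [hM, Matrix.mulVec, dotProduct] using this
    · intro h i hi
      have := congr_fun h ⟨i, hi⟩
      simpa [hM, Matrix.mulVec, dotProduct] using this
  rw [hkereq]
  have hrank : M.rank = Λ.card := by
    have h1 : M.rank = Mᵀ.rank := (Matrix.rank_transpose M).symm
    rw [h1, Matrix.rank_eq_finrank_span_cols]
    change Module.finrank ℝ (Submodule.span ℝ (Set.range M)) = Λ.card
    have : Set.range M = Set.range (fun i : Λ => L i.1) := by rw [← hrows]
    rw [this, finrank_span_eq_card hli, Fintype.card_coe]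
  have hrn := LinearMap.finrank_range_add_finrank_ker M.mulVecLin
  have hdom : Module.finrank ℝ (Fin N → ℝ) = N := by simp
  have hrange : Module.finrank ℝ (LinearMap.range M.mulVecLin) = Λ.card := by
    rw [← hrank]; rfl
  omega
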